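/- Let A, B, C, a, b, c be elements of a field K with Aa^p + Bb^p = Cc³ and ABCabc ≠ 0. Then the j-invariant of the curve E: Y² + 3Cc·XY + C²Bb^p·Y = X³ equals 27·Cc³(9Aa^p + Bb^p)³ / (AB³(ab³)^p), and moreover setting μ = Bb^p/(Aa^p), this equals 27·(1+μ)(9+μ)³/μ³. -/
import Mathlib


/-- the `j`-invariant (that is, `c₄³/Δ`) of the Frey curve
`Y² + 3Cc·XY + C²Bbᵖ·Y = X³` attached to a solution of `Aaᵖ + Bbᵖ = Cc³` with
`ABCabc ≠ 0` equals `27·Cc³(9Aaᵖ + Bbᵖ)³/(AB³(ab³)ᵖ)`, and with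
`μ = Bbᵖ/(Aaᵖ)` it also equals `27·(1+μ)(9+μ)³/μ³`. -/
theorem stmt3 {K : Type*} [Field K] (A B C a b c : K) (p : ℕ)
    (heq : A * a ^ p + B * b ^ p = C * c ^ 3)
    (hne : A * B * C * a * b * c ≠ 0)
    (W : WeierstrassCurve K) (hW : W = ⟨3 * C * c, 0, C ^ 2 * B * b ^ p, 0, 0⟩)
    (μ : K) (hμ : μ = B * b ^ p / (A * a ^ p)) :
    W.c₄ ^ 3 / W.Δ
        = 27 * (C * c ^ 3 * (9 * A * a ^ p + B * b ^ p) ^ 3)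
            / (A * B ^ 3 * (a * b ^ 3) ^ p) ∧
    W.c₄ ^ 3 / W.Δ = 27 * ((1 + μ) * (9 + μ) ^ 3) / μ ^ 3 := by
  have hA : A ≠ 0 := fun h => hne (by simp [h])
  have hB : B ≠ 0 := fun h => hne (by simp [h])
  have hC : C ≠ 0 := fun h => hne (by simp [h])
  have ha : a ≠ 0 := fun h => hne (by simp [h])
  have hb : b ≠ 0 := fun h => hne (by simp [h])
  have hc : c ≠ 0 := fun h => hne (by simp [h])
  have hap : a ^ p ≠ 0 := pow_ne_zero _ ha
  have hbp : b ^ p ≠ 0 := pow_ne_zero _ hb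
  subst hW
  have hc4 : WeierstrassCurve.c₄ ⟨3 * C * c, 0, C ^ 2 * B * b ^ p, 0, 0⟩
      = 9 * C ^ 3 * c * (9 * A * a ^ p + B * b ^ p) := by
    simp only [WeierstrassCurve.c₄, WeierstrassCurve.b₂, WeierstrassCurve.b₄]
    linear_combination (-81 * C ^ 3 * c) * heq
  have hΔ : WeierstrassCurve.Δ ⟨3 * C * c, 0, C ^ 2 * B * b ^ p, 0, 0⟩
      = 27 * C ^ 8 * B ^ 3 * (b ^ p) ^ 3 * (A * a ^ p) := by
    simp only [WeierstrassCurve.Δ, WeierstrassCurve.b₂, WeierstrassCurve.b₄,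
      WeierstrassCurve.b₆, WeierstrassCurve.b₈]
    linear_combination (-27 * C ^ 8 * B ^ 3 * (b ^ p) ^ 3) * heq
  rw [hc4, hΔ]
  have h1 : (9 * C ^ 3 * c * (9 * A * a ^ p + B * b ^ p)) ^ 3
      / (27 * C ^ 8 * B ^ 3 * (b ^ p) ^ 3 * (A * a ^ p))
      = 27 * (C * c ^ 3 * (9 * A * a ^ p + B * b ^ p) ^ 3)
        / (A * B ^ 3 * (a * b ^ 3) ^ p) := by
    by_cases h27 : (27 : K) = 0
    · rw [h27]
      simp
    · have hd1 : 27 * C ^ 8 * B ^ 3 * (b ^ p) ^ 3 * (A * a ^ p) ≠ 0 := by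
        apply_rules [mul_ne_zero, pow_ne_zero]
      have hd2 : A * B ^ 3 * (a * b ^ 3) ^ p ≠ 0 := by
        apply_rules [mul_ne_zero, pow_ne_zero]
      rw [div_eq_div_iff hd1 hd2]
      ring
  have h2 : 27 * ((1 + μ) * (9 + μ) ^ 3) / μ ^ 3
      = 27 * (C * c ^ 3 * (9 * A * a ^ p + B * b ^ p) ^ 3)
        / (A * B ^ 3 * (a * b ^ 3) ^ p) := by
    rw [hμ, ← heq]
    field_simp
    ring
  exact ⟨h1, h1.trans h2.symm⟩
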